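/- arXiv:1811.10843 — 3 statements merged into one kernel-verified Lean document; each statement's English description precedes it below -/
import Mathlib

section
/- Let D be a self-adjoint (possibly unbounded) operator on a Hilbert space H with domain dom(D), and let b be a bounded operator on H such that b·dom(D) ⊆ dom(D) and the commutator [D,b] = Db − bD is bounded on dom(D). Then the adjoint b* also satisfies b*·dom(D) ⊆ dom(D), and on dom(D) the commutator [D,b*] equals −([D,b])*. -/
local notation "⟪" x ", " y "⟫" => @inner ℂ _ _ x y

/-- If `b` is a bounded operator preserving the domain of a self-adjoint operator `D`
with bounded commutator `[D,b]` (with bounded extension `B`), then the adjoint `b*` also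
preserves the domain and `[D,b*] = -([D,b])*` on the domain. -/
theorem adjoint_preserves_domain_and_commutator
    {H : Type*} [NormedAddCommGroup H] [InnerProductSpace ℂ H] [CompleteSpace H]
    (D : H →ₗ.[ℂ] H) (hD : IsSelfAdjoint D)
    (b : H →L[ℂ] H) (hb : ∀ ξ ∈ D.domain, b ξ ∈ D.domain)
    (B : H →L[ℂ] H)
    (hB : ∀ ξ : D.domain, B (ξ : H) = D ⟨b (ξ : H), hb (ξ : H) ξ.2⟩ - b (D ξ)) :
    ∃ hbs : ∀ ξ ∈ D.domain, ContinuousLinearMap.adjoint b ξ ∈ D.domain,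
      ∀ ξ : D.domain,
        D ⟨ContinuousLinearMap.adjoint b (ξ : H), hbs (ξ : H) ξ.2⟩
            - ContinuousLinearMap.adjoint b (D ξ)
          = - (ContinuousLinearMap.adjoint B (ξ : H)) := by
  have hdense : Dense (D.domain : Set H) := hD.dense_domain
  have hDeq : LinearPMap.adjoint D = D := hD
  have hle : D ≤ LinearPMap.adjoint D := hDeq.ge
  have hge : LinearPMap.adjoint D ≤ D := hDeq.le
  -- symmetry of D
  have hsymm : ∀ (x y : D.domain), ⟪D x, (y : H)⟫ = ⟪(x : H), D y⟫ := by
    intro x y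
    have h1 : D x = (LinearPMap.adjoint D) ⟨(x : H), hle.1 x.2⟩ := hle.2 rfl
    rw [h1]
    exact LinearPMap.adjoint_isFormalAdjoint hdense ⟨(x : H), hle.1 x.2⟩ y
  -- key inner-product identity
  have key : ∀ (ξ x : D.domain),
      ⟪ContinuousLinearMap.adjoint b (D ξ) - ContinuousLinearMap.adjoint B (ξ : H),
        (x : H)⟫ = ⟪ContinuousLinearMap.adjoint b (ξ : H), D x⟫ := by
    intro ξ x
    rw [ContinuousLinearMap.adjoint_inner_left, inner_sub_left,
      ContinuousLinearMap.adjoint_inner_left, ContinuousLinearMap.adjoint_inner_left]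
    have : b (D x) = D ⟨b (x : H), hb (x : H) x.2⟩ - B (x : H) := by
      rw [hB x]; abel
    rw [this, inner_sub_right]
    congr 1
    exact hsymm ξ ⟨b (x : H), hb (x : H) x.2⟩
  -- membership in the adjoint domain
  have hmem : ∀ ξ : D.domain,
      ContinuousLinearMap.adjoint b (ξ : H) ∈ (LinearPMap.adjoint D).domain := by
    intro ξ
    exact LinearPMap.mem_adjoint_domain_of_exists _
      ⟨ContinuousLinearMap.adjoint b (D ξ) - ContinuousLinearMap.adjoint B (ξ : H),
        fun x => key ξ x⟩
  have hbs : ∀ ξ ∈ D.domain, ContinuousLinearMap.adjoint b ξ ∈ D.domain := by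
    intro ξ hξ
    exact hge.1 (hmem ⟨ξ, hξ⟩)
  refine ⟨hbs, fun ξ => ?_⟩
  have hval : (LinearPMap.adjoint D) ⟨ContinuousLinearMap.adjoint b (ξ : H), hmem ξ⟩
      = ContinuousLinearMap.adjoint b (D ξ) - ContinuousLinearMap.adjoint B (ξ : H) :=
    LinearPMap.adjoint_apply_eq hdense _ (fun x => key ξ x)
  have h2 : D ⟨ContinuousLinearMap.adjoint b (ξ : H), hbs (ξ : H) ξ.2⟩
      = (LinearPMap.adjoint D) ⟨ContinuousLinearMap.adjoint b (ξ : H), hmem ξ⟩ :=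
    (hge.2 rfl).symm
  rw [h2, hval]; abel
end

section
/- Let D be a self-adjoint operator on a Hilbert space H, and let (a_n) be a sequence of bounded operators on H, each preserving dom(D), with ‖[D,a_n]‖ ≤ 1 for all n, converging in operator norm to a bounded operator a. Then a preserves dom(D), [D,a] is bounded, and ‖[D,a]‖ ≤ 1. -/
open Filter
open scoped InnerProductSpace

private lemma pmap_apply_congr {H : Type*} [NormedAddCommGroup H] [InnerProductSpace ℂ H]
    {A B : H →ₗ.[ℂ] H} (h : A = B) (x : H) (hx : x ∈ A.domain) :
    A ⟨x, hx⟩ = B ⟨x, h ▸ hx⟩ := by subst h; rfl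

/-- Lower semicontinuity of `L_D(a) = ‖[D,a]‖`: if `(aₙ)` is a sequence of bounded operators
preserving the domain of the self-adjoint operator `D`, with `‖[D,aₙ]‖ ≤ 1` for all `n`,
converging in operator norm to `a`, then `a` preserves `dom D`, `[D,a]` is bounded and
`‖[D,a]‖ ≤ 1`. -/
theorem commutator_norm_le_of_tendsto
    {H : Type*} [NormedAddCommGroup H] [InnerProductSpace ℂ H] [CompleteSpace H]
    (D : H →ₗ.[ℂ] H) (hD : IsSelfAdjoint D)
    (a : H →L[ℂ] H) (aseq : ℕ → H →L[ℂ] H)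
    (hpres : ∀ n, ∀ ξ ∈ D.domain, aseq n ξ ∈ D.domain)
    (hbound : ∀ n, ∀ ξ : D.domain,
      ‖D ⟨aseq n (ξ : H), hpres n (ξ : H) ξ.2⟩ - aseq n (D ξ)‖ ≤ ‖(ξ : H)‖)
    (hlim : Filter.Tendsto aseq Filter.atTop (nhds a)) :
    ∃ ha : ∀ ξ ∈ D.domain, a ξ ∈ D.domain,
      ∀ ξ : D.domain, ‖D ⟨a (ξ : H), ha (ξ : H) ξ.2⟩ - a (D ξ)‖ ≤ ‖(ξ : H)‖ := by
  have hdense : Dense (D.domain : Set H) := hD.dense_domain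
  have hDadj : D.adjoint = D := hD
  have hfa : D.IsFormalAdjoint D := by
    have h := LinearPMap.adjoint_isFormalAdjoint (T := D) hdense
    rwa [hDadj] at h
  have happ : ∀ x : H, Tendsto (fun n => aseq n x) atTop (nhds (a x)) := fun x =>
    ((ContinuousLinearMap.apply ℂ H x).continuous.tendsto a).comp hlim
  have key : ∀ ξ : D.domain, ∃ u : H, ‖u‖ ≤ ‖(ξ : H)‖ ∧
      ∀ η : D.domain, ⟪a (D ξ) + u, (η : H)⟫_ℂ = ⟪a (ξ : H), (D η : H)⟫_ℂ := by
    intro ξ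
    set L : D.domain →ₗ[ℂ] ℂ :=
      (innerₛₗ ℂ (a (ξ : H))).comp D.toFun -
        (innerₛₗ ℂ (a (D ξ))).comp (D.domain.subtype) with hLdef
    have hLapply : ∀ η : D.domain,
        L η = ⟪a (ξ : H), (D η : H)⟫_ℂ - ⟪a (D ξ), (η : H)⟫_ℂ := fun η => rfl
    have hconv : ∀ η : D.domain,
        Tendsto (fun n =>
            ⟪(D ⟨aseq n (ξ : H), hpres n (ξ : H) ξ.2⟩ : H) - aseq n (D ξ), (η : H)⟫_ℂ)
          atTop (nhds (L η)) := by
      intro η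
      have h1 : Tendsto (fun n => ⟪aseq n (ξ : H), (D η : H)⟫_ℂ) atTop
          (nhds ⟪a (ξ : H), (D η : H)⟫_ℂ) := (happ (ξ : H)).inner tendsto_const_nhds
      have h2 : Tendsto (fun n => ⟪aseq n (D ξ), (η : H)⟫_ℂ) atTop
          (nhds ⟪a (D ξ), (η : H)⟫_ℂ) := (happ (D ξ)).inner tendsto_const_nhds
      have h3 := h1.sub h2
      rw [hLapply η]
      refine h3.congr fun n => ?_
      rw [inner_sub_left]
      congr 1
      exact (hfa ⟨aseq n (ξ : H), hpres n (ξ : H) ξ.2⟩ η).symm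
    have hbnd : ∀ η : D.domain, ‖L η‖ ≤ ‖(ξ : H)‖ * ‖η‖ := by
      intro η
      refine le_of_tendsto (hconv η).norm (Filter.Eventually.of_forall fun n => ?_)
      calc ‖⟪(D ⟨aseq n (ξ : H), hpres n (ξ : H) ξ.2⟩ : H) - aseq n (D ξ), (η : H)⟫_ℂ‖
          ≤ ‖(D ⟨aseq n (ξ : H), hpres n (ξ : H) ξ.2⟩ : H) - aseq n (D ξ)‖ * ‖(η : H)‖ :=
            norm_inner_le_norm _ _
        _ ≤ ‖(ξ : H)‖ * ‖(η : H)‖ :=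
            mul_le_mul_of_nonneg_right (hbound n ξ) (norm_nonneg _)
    set φ : D.domain →L[ℂ] ℂ := LinearMap.mkContinuous L ‖(ξ : H)‖ hbnd with hφdef
    set φext : H →L[ℂ] ℂ := φ.extend (Submodule.subtypeL D.domain) with hφextdef
    have hext : ∀ η : D.domain, φext (η : H) = L η := fun η =>
      φ.extend_eq hdense.denseRange_val isUniformEmbedding_subtype_val.isUniformInducing η
    have hextnorm : ∀ z : H, ‖φext z‖ ≤ ‖(ξ : H)‖ * ‖z‖ := by
      refine isClosed_property hdense.denseRange_val
        (isClosed_le φext.continuous.norm (continuous_const.mul continuous_norm)) fun η => ?_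
      rw [hext η]
      exact hbnd η
    set u : H := (InnerProductSpace.toDual ℂ H).symm φext with hudef
    have huinner : ∀ z : H, ⟪u, z⟫_ℂ = φext z := fun z =>
      InnerProductSpace.toDual_symm_apply
    refine ⟨u, ?_, ?_⟩
    · have : ‖u‖ = ‖φext‖ := (InnerProductSpace.toDual ℂ H).symm.norm_map φext
      rw [this]
      exact ContinuousLinearMap.opNorm_le_bound _ (norm_nonneg _) hextnorm
    · intro η
      rw [inner_add_left, huinner, hext η, hLapply η]
      ring
  have ha : ∀ x ∈ D.domain, a x ∈ D.domain := by
    intro x hx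
    obtain ⟨u, _, hu2⟩ := key ⟨x, hx⟩
    have hmem : a x ∈ D.adjoint.domain :=
      LinearPMap.mem_adjoint_domain_of_exists (T := D) (a x)
        ⟨a (D ⟨x, hx⟩) + u, fun η => hu2 η⟩
    rwa [hDadj] at hmem
  refine ⟨ha, fun ξ => ?_⟩
  obtain ⟨u, hu, hu2⟩ := key ξ
  have hmem : a (ξ : H) ∈ D.adjoint.domain := by
    rw [hDadj]; exact ha (ξ : H) ξ.2
  have happly : D.adjoint ⟨a (ξ : H), hmem⟩ = a (D ξ) + u :=
    LinearPMap.adjoint_apply_eq hdense ⟨a (ξ : H), hmem⟩ fun η => hu2 η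
  have hDval : D ⟨a (ξ : H), ha (ξ : H) ξ.2⟩ = a (D ξ) + u := by
    have h1 := pmap_apply_congr hDadj (a (ξ : H)) hmem
    rw [← happly]
    exact h1.symm
  rw [hDval, add_sub_cancel_left]
  exact hu
end

section
/- Let H be a Hilbert space, x a positive bounded operator on H with ‖x‖ ≤ 1, D₁, D₂ norms (D-norms) on dense subspaces of H with ‖ξ‖ ≤ Dⱼ(ξ), and ε > 0. Define on H ⊕ H the ℂ⊕ℂ-valued inner product ⟨(ξ,η),(ξ',η')⟩ = (⟨xξ,ξ'⟩, ⟨xη,η'⟩), the seminorm Q(z,w) = |z−w|/(2ε) on ℂ⊕ℂ, and D'(ξ,η) = max{D₁(ξ), D₂(η), ‖x(ξ−η)‖/(2ε)}. Then for all ξ,ξ',η,η' ∈ H: Q(⟨(ξ,η),(ξ',η')⟩) ≤ 2·D'(ξ,η)·D'(ξ',η'). -/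
/-- Quasi-Leibniz inequality for the `ℂ⊕ℂ`-valued inner product twisted by a positive
contraction `x`: with `Q(z,w) = |z-w|/(2ε)` and
`D'(ξ,η) = max{D₁(ξ), D₂(η), ‖x(ξ-η)‖/(2ε)}`, one has
`Q(⟨(ξ,η),(ξ',η')⟩) ≤ 2·D'(ξ,η)·D'(ξ',η')` where
`⟨(ξ,η),(ξ',η')⟩ = (⟨xξ,ξ'⟩, ⟨xη,η'⟩)`. -/
theorem twisted_inner_quasi_leibniz
    {H : Type*} [NormedAddCommGroup H] [InnerProductSpace ℂ H] [CompleteSpace H]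
    (x : H →L[ℂ] H) (hx : x.IsPositive) (hx1 : ‖x‖ ≤ 1)
    (D₁ D₂ : H → ℝ) (hD₁ : ∀ ξ : H, ‖ξ‖ ≤ D₁ ξ) (hD₂ : ∀ ξ : H, ‖ξ‖ ≤ D₂ ξ)
    (ε : ℝ) (hε : 0 < ε) :
    ∀ ξ η ξ' η' : H,
      ‖(inner ℂ (x ξ) ξ' : ℂ) - (inner ℂ (x η) η' : ℂ)‖ / (2 * ε)
        ≤ 2 * (max (max (D₁ ξ) (D₂ η)) (‖x (ξ - η)‖ / (2 * ε)))
            * (max (max (D₁ ξ')  (D₂ η')) (‖x (ξ' - η')‖ / (2 * ε))) := by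
  intro ξ η ξ' η'
  set a := max (max (D₁ ξ) (D₂ η)) (‖x (ξ - η)‖ / (2 * ε)) with ha
  set b := max (max (D₁ ξ') (D₂ η')) (‖x (ξ' - η')‖ / (2 * ε)) with hb
  have hsa : ContinuousLinearMap.adjoint x = x := hx.isSelfAdjoint.adjoint_eq
  have key : (inner ℂ (x ξ) ξ' : ℂ) - (inner ℂ (x η) η' : ℂ)
      = (inner ℂ (x (ξ - η)) ξ' : ℂ) + (inner ℂ η (x (ξ' - η')) : ℂ) := by
    rw [← hsa, ContinuousLinearMap.adjoint_inner_right, hsa]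
    simp only [map_sub, inner_sub_left, inner_sub_right]
    ring
  have habs : ‖(inner ℂ (x ξ) ξ' : ℂ) - (inner ℂ (x η) η' : ℂ)‖
      ≤ ‖x (ξ - η)‖ * ‖ξ'‖ + ‖η‖ * ‖x (ξ' - η')‖ := by
    rw [key]
    calc ‖(inner ℂ (x (ξ - η)) ξ' : ℂ) + (inner ℂ η (x (ξ' - η')) : ℂ)‖
        ≤ ‖(inner ℂ (x (ξ - η)) ξ' : ℂ)‖
            + ‖(inner ℂ η (x (ξ' - η')) : ℂ)‖ := norm_add_le _ _
      _ ≤ ‖x (ξ - η)‖ * ‖ξ'‖ + ‖η‖ * ‖x (ξ' - η')‖ := by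
          gcongr <;> · exact norm_inner_le_norm _ _
  have h1 : ‖x (ξ - η)‖ / (2 * ε) ≤ a := le_max_right _ _
  have h2 : ‖ξ'‖ ≤ b := (hD₁ ξ').trans ((le_max_left _ _).trans (le_max_left _ _))
  have h3 : ‖η‖ ≤ a := (hD₂ η).trans ((le_max_right _ _).trans (le_max_left _ _))
  have h4 : ‖x (ξ' - η')‖ / (2 * ε) ≤ b := le_max_right _ _
  have hεpos : (0:ℝ) < 2 * ε := by linarith
  rw [div_le_iff₀ hεpos]
  have hn1 : (0:ℝ) ≤ ‖x (ξ - η)‖ := norm_nonneg _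
  have hn2 : (0:ℝ) ≤ ‖ξ'‖ := norm_nonneg _
  have hn3 : (0:ℝ) ≤ ‖η‖ := norm_nonneg _
  have hn4 : (0:ℝ) ≤ ‖x (ξ' - η')‖ := norm_nonneg _
  have h1' : ‖x (ξ - η)‖ ≤ a * (2 * ε) := by rwa [div_le_iff₀ hεpos] at h1
  have h4' : ‖x (ξ' - η')‖ ≤ b * (2 * ε) := by rwa [div_le_iff₀ hεpos] at h4
  have hb0 : (0:ℝ) ≤ b := hn2.trans h2
  have ha0 : (0:ℝ) ≤ a := hn3.trans h3
  calc ‖(inner ℂ (x ξ) ξ' : ℂ) - (inner ℂ (x η) η' : ℂ)‖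
      ≤ ‖x (ξ - η)‖ * ‖ξ'‖ + ‖η‖ * ‖x (ξ' - η')‖ := habs
    _ ≤ (a * (2 * ε)) * b + a * (b * (2 * ε)) := by
        gcongr
    _ = 2 * a * b * (2 * ε) := by ring
end
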